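/- arXiv:2109.08646 — 2 statements merged into one kernel-verified Lean document; each statement's English description precedes it below -/
import Mathlib

section
/- Let G be a compact group, γ: G → [0,1] a Cayley function, and w the Cayley graphon w(x,y) = γ(xy⁻¹) with integral operator T_w on L²(G). Then for every f ∈ L²(G), T_w(f) = L(γ)f, where L(γ) = ∫_G γ(y) L(y) dy and L is the left regular representation (L(g)f)(h) = f(g⁻¹h). -/
open MeasureTheory

/-- Uniqueness: any left-invariant probability measure on a compact group equals the Haar
probability measure. -/
lemma eq_haar_of_isMulLeftInvariant
    {G : Type*} [Group G] [TopologicalSpace G] [IsTopologicalGroup G]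
    [CompactSpace G] [MeasurableSpace G] [BorelSpace G]
    (μ : Measure G) [μ.IsHaarMeasure] [IsProbabilityMeasure μ]
    (μ' : Measure G) [μ'.IsMulLeftInvariant] [IsProbabilityMeasure μ'] :
    μ' = μ := by
  have h := Measure.isMulInvariant_eq_smul_of_compactSpace μ' μ
  have hu := congrArg (fun m : Measure G => m Set.univ) h
  simp only [measure_univ, Measure.smul_apply, smul_eq_mul, mul_one] at hu
  have hc : (Measure.haarScalarFactor μ' μ : ENNReal) = 1 := by
    simpa [ENNReal.smul_def] using hu.symm
  rw [h, show Measure.haarScalarFactor μ' μ = 1 by exact_mod_cast hc, one_smul]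

/-- On a compact group, the Haar probability measure is right-invariant. -/
lemma haar_isMulRightInvariant
    {G : Type*} [Group G] [TopologicalSpace G] [IsTopologicalGroup G]
    [CompactSpace G] [MeasurableSpace G] [BorelSpace G]
    (μ : Measure G) [μ.IsHaarMeasure] [IsProbabilityMeasure μ] :
    μ.IsMulRightInvariant := by
  constructor
  intro g
  set ν := Measure.map (· * g) μ with hν
  have hl : ν.IsMulLeftInvariant := by
    constructor
    intro h
    show Measure.map (h * ·) ν = ν
    rw [hν, Measure.map_map (measurable_const_mul h) (measurable_mul_const g),
      show ((h * ·) ∘ (· * g)) = ((· * g) ∘ (h * ·)) from by ext z; simp [mul_assoc],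
      ← Measure.map_map (measurable_mul_const g) (measurable_const_mul h),
      map_mul_left_eq_self μ h]
  have hp : IsProbabilityMeasure ν :=
    Measure.isProbabilityMeasure_map (measurable_mul_const g).aemeasurable
  exact eq_haar_of_isMulLeftInvariant μ ν

/-- On a compact group, the Haar probability measure is inverse-invariant. -/
lemma haar_isInvInvariant
    {G : Type*} [Group G] [TopologicalSpace G] [IsTopologicalGroup G]
    [CompactSpace G] [MeasurableSpace G] [BorelSpace G]
    (μ : Measure G) [μ.IsHaarMeasure] [IsProbabilityMeasure μ] :
    μ.IsInvInvariant := by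
  haveI := haar_isMulRightInvariant μ
  constructor
  haveI : μ.inv.IsMulLeftInvariant := inferInstance
  have hp : IsProbabilityMeasure μ.inv := by
    constructor
    rw [Measure.inv_apply]
    simp
  exact eq_haar_of_isMulLeftInvariant μ μ.inv

/-- For the Cayley graphon `w(x,y) = γ(x y⁻¹)` on a compact group `G` with
Haar probability measure, the integral operator agrees with the weak integral
`L(γ) = ∫ γ(y) L(y) dy` of the left regular representation `(L(g)f)(h) = f(g⁻¹ h)`:
for every `f ∈ L²(G)` and a.e. `x`, `T_w(f)(x) = ∫ γ(y) (L(y)f)(x) dy`. -/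
theorem stmt_2
    {G : Type*} [Group G] [TopologicalSpace G] [IsTopologicalGroup G]
    [CompactSpace G] [MeasurableSpace G] [BorelSpace G]
    (μ : Measure G) [μ.IsHaarMeasure] [IsProbabilityMeasure μ]
    (γ : G → ℝ) (hmeas : Measurable γ) (h01 : ∀ x, γ x ∈ Set.Icc (0 : ℝ) 1)
    (hsym : ∀ x, γ x = γ x⁻¹)
    (f : G → ℂ) (hf : MemLp f 2 μ) :
    ∀ᵐ x ∂μ,
      (∫ y, (γ (x * y⁻¹) : ℂ) * f y ∂μ) = ∫ y, (γ y : ℂ) * f (y⁻¹ * x) ∂μ := by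
  haveI : μ.IsInvInvariant := haar_isInvInvariant μ
  refine Filter.Eventually.of_forall fun x => ?_
  -- the map `y ↦ y⁻¹ * x = (x⁻¹ * y)⁻¹` is measure preserving
  have hpres : MeasurePreserving (fun y : G => y⁻¹ * x) μ μ := by
    have := Measure.measurePreserving_mul_right_inv μ x⁻¹
    simpa [mul_inv_rev] using this
  have hemb : MeasurableEmbedding (fun y : G => y⁻¹ * x) :=
    ((MeasurableEquiv.inv G).trans (MeasurableEquiv.mulRight x)).measurableEmbedding
  have := (hpres.integral_comp hemb (fun y => (γ (x * y⁻¹) : ℂ) * f y)).symm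
  simpa [mul_inv_rev, mul_assoc] using this
end

section
/- Let H be a Hilbert space, f ∈ H, and for each n ∈ ℕ let {P_{n,j}}_{j ∈ J} and {P_j}_{j ∈ J} be families of pairwise-orthogonal orthogonal projections on H (i.e., P_{n,j}P_{n,k} = 0 and P_jP_k = 0 for j ≠ k). Assume f = Σ_{j∈J} P_j(f) (convergent in H) and for every j ∈ J, ‖P_{n,j}(f) − P_j(f)‖ → 0 as n → ∞. Then Σ_{j∈J} ‖P_{n,j}(f) − P_j(f)‖² → 0 as n → ∞. -/
open Filter Finset
open scoped InnerProductSpace ComplexConjugate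

lemma sa_move {H : Type*} [NormedAddCommGroup H] [InnerProductSpace ℂ H] [CompleteSpace H]
    (A : H →L[ℂ] H) (hA : IsSelfAdjoint A) (x y : H) :
    ⟪A x, y⟫_ℂ = ⟪x, A y⟫_ℂ := by
  rw [← hA.adjoint_eq, ContinuousLinearMap.adjoint_inner_left, hA.adjoint_eq]

lemma bessel {H : Type*} [NormedAddCommGroup H] [InnerProductSpace ℂ H] [CompleteSpace H]
    {J : Type*} (Q : J → H →L[ℂ] H)
    (hQ : ∀ j, IsIdempotentElem (Q j)) (hQsa : ∀ j, IsSelfAdjoint (Q j))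
    (horth : ∀ j k, j ≠ k → Q j * Q k = 0) (g : H) (F : Finset J) :
    ∑ j ∈ F, ‖Q j g‖ ^ 2 ≤ ‖g‖ ^ 2 := by
  classical
  set s : H := ∑ j ∈ F, Q j g with hs
  have key : ∀ j ∈ F, ∀ k ∈ F, ⟪Q j g, Q k g⟫_ℂ =
      if j = k then ⟪Q j g, Q j g⟫_ℂ else 0 := by
    intro j _ k _
    split_ifs with h
    · subst h; rfl
    · rw [sa_move _ (hQsa j), ← ContinuousLinearMap.mul_apply, horth j k h]
      simp
  have hss : ⟪s, s⟫_ℂ = ∑ j ∈ F, ⟪Q j g, Q j g⟫_ℂ := by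
    rw [hs, sum_inner]
    refine Finset.sum_congr rfl fun j hj => ?_
    rw [inner_sum, Finset.sum_congr rfl fun k hk => key j hj k hk,
      Finset.sum_ite_eq F j (fun _ => ⟪Q j g, Q j g⟫_ℂ), if_pos hj]
  have hgs : ⟪g, s⟫_ℂ = ⟪s, s⟫_ℂ := by
    rw [hss, hs, inner_sum]
    refine Finset.sum_congr rfl fun j hj => ?_
    conv_lhs => rw [← (hQ j).eq]
    rw [ContinuousLinearMap.mul_apply, ← sa_move _ (hQsa j)]
  have hsum_eq : ∑ j ∈ F, ‖Q j g‖ ^ 2 = ‖s‖ ^ 2 := by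
    have := congrArg Complex.re hss
    rw [Complex.re_sum] at this
    calc ∑ j ∈ F, ‖Q j g‖ ^ 2 = ∑ j ∈ F, Complex.re ⟪Q j g, Q j g⟫_ℂ :=
          Finset.sum_congr rfl fun j _ => (inner_self_eq_norm_sq (𝕜 := ℂ) _).symm
      _ = Complex.re ⟪s, s⟫_ℂ := this.symm
      _ = ‖s‖ ^ 2 := inner_self_eq_norm_sq (𝕜 := ℂ) _
  have hle : ‖s‖ ^ 2 ≤ ‖g‖ * ‖s‖ := by
    calc ‖s‖ ^ 2 = Complex.re ⟪s, s⟫_ℂ := (inner_self_eq_norm_sq (𝕜 := ℂ) _).symm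
      _ = Complex.re ⟪g, s⟫_ℂ := by rw [hgs]
      _ ≤ ‖(⟪g, s⟫_ℂ)‖ := Complex.re_le_norm _
      _ ≤ ‖g‖ * ‖s‖ := norm_inner_le_norm _ _
  rw [hsum_eq]
  nlinarith [norm_nonneg s, norm_nonneg g, sq_nonneg (‖g‖ - ‖s‖)]

lemma hasSum_proj_norm_sq {H : Type*} [NormedAddCommGroup H] [InnerProductSpace ℂ H]
    [CompleteSpace H] {J : Type*} (P : J → H →L[ℂ] H) (f : H)
    (hP : ∀ j, IsIdempotentElem (P j)) (hPsa : ∀ j, IsSelfAdjoint (P j))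
    (hsum : HasSum (fun j => P j f) f) :
    HasSum (fun j => ‖P j f‖ ^ 2) (‖f‖ ^ 2) := by
  have h1 : HasSum (fun j => (innerSL ℂ f) (P j f)) ((innerSL ℂ f) f) :=
    (innerSL ℂ f).hasSum hsum
  have h2 : HasSum (fun j => Complex.reCLM ((innerSL ℂ f) (P j f)))
      (Complex.reCLM ((innerSL ℂ f) f)) := Complex.reCLM.hasSum h1
  have h3 : ∀ j, Complex.reCLM ((innerSL ℂ f) (P j f)) = ‖P j f‖ ^ 2 := by
    intro j
    have : (innerSL ℂ f) (P j f) = ⟪f, P j f⟫_ℂ := rfl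
    rw [Complex.reCLM_apply, this]
    conv_lhs => rw [← (hP j).eq]
    rw [ContinuousLinearMap.mul_apply, ← sa_move _ (hPsa j)]
    exact inner_self_eq_norm_sq (𝕜 := ℂ) _
  have h4 : Complex.reCLM ((innerSL ℂ f) f) = ‖f‖ ^ 2 :=
    inner_self_eq_norm_sq (𝕜 := ℂ) _
  rw [h4] at h2
  exact funext h3 ▸ h2


/-- Let `f` be a vector in a Hilbert space, and for each `n` let
`{P_{n,j}}_{j∈J}` and `{P_j}_{j∈J}` be families of pairwise-orthogonal orthogonal projections
(`J` countable).  If `f = Σ_j P_j f` and for each `j`, `‖P_{n,j} f − P_j f‖ → 0`, then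
`Σ_j ‖P_{n,j} f − P_j f‖² → 0` as `n → ∞`. -/
theorem stmt_15
    {H : Type*} [NormedAddCommGroup H] [InnerProductSpace ℂ H] [CompleteSpace H]
    {J : Type*} [Countable J]
    (f : H) (P : J → H →L[ℂ] H) (Pn : ℕ → J → H →L[ℂ] H)
    (hP : ∀ j, IsIdempotentElem (P j)) (hPsa : ∀ j, IsSelfAdjoint (P j))
    (hPn : ∀ n j, IsIdempotentElem (Pn n j)) (hPnsa : ∀ n j, IsSelfAdjoint (Pn n j))
    (horth : ∀ j k, j ≠ k → P j * P k = 0)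
    (horthn : ∀ n, ∀ j k, j ≠ k → Pn n j * Pn n k = 0)
    (hsum : HasSum (fun j => P j f) f)
    (hconv : ∀ j, Tendsto (fun n => ‖Pn n j f - P j f‖) atTop (nhds 0)) :
    Tendsto (fun n => ∑' j, ‖Pn n j f - P j f‖ ^ 2) atTop (nhds 0) := by
  classical
  have hb : HasSum (fun j => ‖P j f‖ ^ 2) (‖f‖ ^ 2) := hasSum_proj_norm_sq P f hP hPsa hsum
  have hbs : Summable fun j => ‖P j f‖ ^ 2 := hb.summable
  have hcF : ∀ n (F : Finset J), ∑ j ∈ F, ‖Pn n j f‖ ^ 2 ≤ ‖f‖ ^ 2 :=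
    fun n F => bessel (Pn n) (hPn n) (hPnsa n) (horthn n) f F
  have hcs : ∀ n, Summable fun j => ‖Pn n j f‖ ^ 2 := fun n =>
    summable_of_sum_le (fun _ => sq_nonneg _) (hcF n)
  have hctsum : ∀ n, ∑' j, ‖Pn n j f‖ ^ 2 ≤ ‖f‖ ^ 2 := fun n =>
    Summable.tsum_le_of_sum_le (hcs n) (hcF n)
  have hbound : ∀ n j, ‖Pn n j f - P j f‖ ^ 2 ≤ 2 * ‖Pn n j f‖ ^ 2 + 2 * ‖P j f‖ ^ 2 := by
    intro n j
    have h := norm_sub_le (Pn n j f) (P j f)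
    nlinarith [norm_nonneg (Pn n j f), norm_nonneg (P j f), norm_nonneg (Pn n j f - P j f),
      sq_nonneg (‖Pn n j f‖ - ‖P j f‖), sq_nonneg (‖Pn n j f‖ + ‖P j f‖)]
  have has : ∀ n, Summable fun j => ‖Pn n j f - P j f‖ ^ 2 := fun n =>
    Summable.of_nonneg_of_le (fun _ => sq_nonneg _) (hbound n)
      (((hcs n).mul_left 2).add (hbs.mul_left 2))
  rw [Metric.tendsto_atTop]
  intro ε hε
  set δ := ε / 8 with hδdef
  have hδ : 0 < δ := by positivity
  obtain ⟨F, hF⟩ : ∃ F : Finset J, ‖f‖ ^ 2 - δ < ∑ j ∈ F, ‖P j f‖ ^ 2 :=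
    (hb.eventually (eventually_gt_nhds (by linarith))).exists
  have hbsplit : ∑ j ∈ F, ‖P j f‖ ^ 2 + ∑' j : ↑(↑F : Set J)ᶜ, ‖P j f‖ ^ 2 = ‖f‖ ^ 2 := by
    rw [Summable.sum_add_tsum_compl hbs, hb.tsum_eq]
  have htailb : ∑' j : ↑(↑F : Set J)ᶜ, ‖P j f‖ ^ 2 < δ := by linarith
  have hfin : Tendsto (fun n => ∑ j ∈ F, ‖Pn n j f - P j f‖ ^ 2) atTop (nhds 0) := by
    have h0 : Tendsto (fun n => ∑ j ∈ F, ‖Pn n j f - P j f‖ ^ 2) atTop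
        (nhds (∑ _j ∈ F, (0 : ℝ))) :=
      tendsto_finset_sum F fun j _ => by simpa using ((hconv j).pow 2)
    simpa using h0
  have hcfin : Tendsto (fun n => ∑ j ∈ F, ‖Pn n j f‖ ^ 2) atTop
      (nhds (∑ j ∈ F, ‖P j f‖ ^ 2)) := by
    refine tendsto_finset_sum F fun j _ => ?_
    have h1 : Tendsto (fun n => Pn n j f) atTop (nhds (P j f)) := by
      rw [tendsto_iff_norm_sub_tendsto_zero]
      exact hconv j
    exact ((continuous_norm.tendsto _).comp h1).pow 2
  have h1 : ∀ᶠ n in atTop, ∑ j ∈ F, ‖Pn n j f - P j f‖ ^ 2 < δ :=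
    hfin.eventually (eventually_lt_nhds hδ)
  have h2 : ∀ᶠ n in atTop, ∑ j ∈ F, ‖P j f‖ ^ 2 - δ < ∑ j ∈ F, ‖Pn n j f‖ ^ 2 :=
    hcfin.eventually (eventually_gt_nhds (by linarith))
  obtain ⟨N, hN⟩ := eventually_atTop.1 (h1.and h2)
  refine ⟨N, fun n hn => ?_⟩
  obtain ⟨hA, hC⟩ := hN n hn
  have hsplitA : ∑ j ∈ F, ‖Pn n j f - P j f‖ ^ 2 +
      ∑' j : ↑(↑F : Set J)ᶜ, ‖Pn n (↑j) f - P (↑j) f‖ ^ 2 =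
      ∑' j, ‖Pn n j f - P j f‖ ^ 2 := Summable.sum_add_tsum_compl (has n)
  have hsplitC : ∑ j ∈ F, ‖Pn n j f‖ ^ 2 +
      ∑' j : ↑(↑F : Set J)ᶜ, ‖Pn n (↑j) f‖ ^ 2 = ∑' j, ‖Pn n j f‖ ^ 2 :=
    Summable.sum_add_tsum_compl (hcs n)
  have htailc : ∑' j : ↑(↑F : Set J)ᶜ, ‖Pn n (↑j) f‖ ^ 2 < 2 * δ := by
    have := hctsum n
    linarith
  have htaila : ∑' j : ↑(↑F : Set J)ᶜ, ‖Pn n (↑j) f - P (↑j) f‖ ^ 2 ≤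
      2 * ∑' j : ↑(↑F : Set J)ᶜ, ‖Pn n (↑j) f‖ ^ 2 +
      2 * ∑' j : ↑(↑F : Set J)ᶜ, ‖P (↑j) f‖ ^ 2 := by
    calc ∑' j : ↑(↑F : Set J)ᶜ, ‖Pn n (↑j) f - P (↑j) f‖ ^ 2
        ≤ ∑' j : ↑(↑F : Set J)ᶜ, (2 * ‖Pn n (↑j) f‖ ^ 2 + 2 * ‖P (↑j) f‖ ^ 2) :=
          Summable.tsum_le_tsum (fun j => hbound n j) ((has n).subtype _)
            (((((hcs n).subtype _).mul_left 2).add ((hbs.subtype _).mul_left 2)))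
      _ = 2 * ∑' j : ↑(↑F : Set J)ᶜ, ‖Pn n (↑j) f‖ ^ 2 +
          2 * ∑' j : ↑(↑F : Set J)ᶜ, ‖P (↑j) f‖ ^ 2 := by
          have s1 : Summable (fun j : ↑(↑F : Set J)ᶜ => 2 * ‖Pn n (↑j) f‖ ^ 2) :=
            ((hcs n).subtype _).mul_left 2
          have s2 : Summable (fun j : ↑(↑F : Set J)ᶜ => 2 * ‖P (↑j) f‖ ^ 2) :=
            (hbs.subtype _).mul_left 2
          rw [Summable.tsum_add s1 s2, tsum_mul_left, tsum_mul_left]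
  have htsum_nonneg : 0 ≤ ∑' j, ‖Pn n j f - P j f‖ ^ 2 :=
    tsum_nonneg fun _ => sq_nonneg _
  rw [Real.dist_eq, sub_zero, abs_of_nonneg htsum_nonneg]
  have : ∑' j, ‖Pn n j f - P j f‖ ^ 2 < 7 * δ := by linarith
  linarith
end
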